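/- Let q_1, …, q_n ∈ ℝ² (n ≥ 2) be points with strictly increasing x-coordinates such that no three distinct points among them are collinear. Define the edge set of Part(S) on S = {q_1, …, q_n} to consist of (a) all chain edges {q_k, q_{k+1}} for 1 ≤ k < n, and (b) all convex hull edges, i.e., pairs {q_i, q_j} such that there is a closed half-plane containing S whose boundary line contains q_i and q_j. Then every point q_k is contained in at most 4 edges of Part(S). -/

import Mathlib

open scoped Classical

abbrev E2 := EuclideanSpace ℝ (Fin 2)

lemma vec_ext (v : E2) (h0 : v 0 = 0) (h1 : v 1 = 0) : v = 0 := by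
  ext i; fin_cases i <;> simpa

lemma decomp (w : E2) : w = w 0 • (EuclideanSpace.single 0 1 : E2) + w 1 • (EuclideanSpace.single 1 1 : E2) := by
  ext i
  fin_cases i <;>
    simp [PiLp.add_apply, PiLp.smul_apply, EuclideanSpace.single_apply]

lemma lin_rep (g : E2 →ₗ[ℝ] ℝ) (v : E2) (hg : g ≠ 0) (hv : v ≠ 0) (h : g v = 0) :
    ∃ c : ℝ, c ≠ 0 ∧ ∀ w : E2, g w = c * (v 0 * w 1 - v 1 * w 0) := by
  set a := g (EuclideanSpace.single 0 1 : E2) with ha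
  set b := g (EuclideanSpace.single 1 1 : E2) with hb
  have rep : ∀ w : E2, g w = w 0 * a + w 1 * b := by
    intro w
    conv_lhs => rw [decomp w]
    simp [map_add, map_smul, smul_eq_mul, ha, hb]
  have hab : ¬ (a = 0 ∧ b = 0) := by
    rintro ⟨ha0, hb0⟩
    apply hg
    ext w
    simp [rep w, ha0, hb0]
  have hgv : v 0 * a + v 1 * b = 0 := by rw [← rep]; exact h
  by_cases h0 : v 0 = 0
  · have h1 : v 1 ≠ 0 := fun h1 => hv (vec_ext v h0 h1)
    have hb0 : b = 0 := by
      have hv1b : v 1 * b = 0 := by rw [h0] at hgv; linarith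
      rcases mul_eq_zero.mp hv1b with h' | h'
      · exact absurd h' h1
      · exact h'
    have ha0 : a ≠ 0 := fun h' => hab ⟨h', hb0⟩
    refine ⟨-a / v 1, div_ne_zero (neg_ne_zero.mpr ha0) h1, fun w => ?_⟩
    rw [rep w, h0, hb0]
    field_simp
    ring
  · have hb0 : b ≠ 0 := by
      intro h'
      have : v 0 * a = 0 := by rw [h'] at hgv; linarith
      rcases mul_eq_zero.mp this with h'' | h''
      · exact h0 h''
      · exact hab ⟨h'', h'⟩
    refine ⟨b / v 0, div_ne_zero hb0 h0, fun w => ?_⟩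
    rw [rep w]
    field_simp
    linear_combination w 0 * hgv

lemma smul_of_cross (v w : E2) (hv : v ≠ 0) (h : v 0 * w 1 - v 1 * w 0 = 0) :
    ∃ t : ℝ, w = t • v := by
  by_cases h0 : v 0 = 0
  · have h1 : v 1 ≠ 0 := fun h1 => hv (vec_ext v h0 h1)
    refine ⟨w 1 / v 1, ?_⟩
    ext i
    fin_cases i <;> simp [PiLp.smul_apply, smul_eq_mul]
    · rw [h0]
      have : v 1 * w 0 = 0 := by rw [h0] at h; linarith
      rcases mul_eq_zero.mp this with h' | h'
      · exact absurd h' h1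
      · rw [h']; ring
    · field_simp
  · refine ⟨w 0 / v 0, ?_⟩
    ext i
    fin_cases i <;> simp [PiLp.smul_apply, smul_eq_mul]
    · field_simp
    · field_simp
      nlinarith [h]

lemma collinear_of_smul (a b c : E2) (t : ℝ) (h : c - a = t • (b - a)) :
    Collinear ℝ ({a, b, c} : Set E2) := by
  have hmem : a ∈ ({a, b, c} : Set E2) := by simp
  rw [collinear_iff_of_mem hmem]
  refine ⟨b - a, fun p hp => ?_⟩
  rcases hp with rfl | rfl | rfl
  · exact ⟨0, by simp⟩
  · exact ⟨1, by simp [vadd_eq_add]⟩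
  · exact ⟨t, by rw [← h]; simp [vadd_eq_add]⟩

lemma partners_le_two (n : ℕ) (q : ℕ → E2)
    (hcol : ∀ i j l, 1 ≤ i → i ≤ n → 1 ≤ j → j ≤ n → 1 ≤ l → l ≤ n →
      q i ≠ q j → q i ≠ q l → q j ≠ q l →
      ¬ Collinear ℝ ({q i, q j, q l} : Set E2))
    (k : ℕ) (hk1 : 1 ≤ k) (hk2 : k ≤ n) :
    {p : E2 | p ≠ q k ∧ ∃ j, 1 ≤ j ∧ j ≤ n ∧ p = q j ∧
      ∃ f : E2 →ᵃ[ℝ] ℝ, f.linear ≠ 0 ∧ (∀ l, 1 ≤ l → l ≤ n → f (q l) ≤ 0) ∧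
        f (q k) = 0 ∧ f p = 0}.ncard ≤ 2 := by
  set P := {p : E2 | p ≠ q k ∧ ∃ j, 1 ≤ j ∧ j ≤ n ∧ p = q j ∧
      ∃ f : E2 →ᵃ[ℝ] ℝ, f.linear ≠ 0 ∧ (∀ l, 1 ≤ l → l ≤ n → f (q l) ≤ 0) ∧
        f (q k) = 0 ∧ f p = 0} with hPdef
  have hPfin : P.Finite := by
    apply Set.Finite.subset ((Set.finite_Icc 1 n).image q)
    rintro p ⟨-, j, hj1, hj2, rfl, -⟩
    exact ⟨j, ⟨hj1, hj2⟩, rfl⟩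
  by_contra hcon
  push_neg at hcon
  obtain ⟨p₁, hp₁, p₂, hp₂, p₃, hp₃, h12, h13, h23⟩ :=
    (Set.two_lt_ncard hPfin).mp hcon
  -- extract data
  obtain ⟨hne₁, j₁, hj₁1, hj₁2, hpj₁, f₁, hflin₁, hfle₁, hfk₁, hfp₁⟩ := hp₁
  obtain ⟨hne₂, j₂, hj₂1, hj₂2, hpj₂, f₂, hflin₂, hfle₂, hfk₂, hfp₂⟩ := hp₂
  obtain ⟨hne₃, j₃, hj₃1, hj₃2, hpj₃, f₃, hflin₃, hfle₃, hfk₃, hfp₃⟩ := hp₃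
  -- strictness: for supporting functional with representation c, other partners give c * cross < 0
  have key : ∀ (p p' : E2) (j j' : ℕ) (f : E2 →ᵃ[ℝ] ℝ) (c : ℝ),
      p ≠ q k → p' ≠ q k → p ≠ p' →
      1 ≤ j → j ≤ n → p = q j → 1 ≤ j' → j' ≤ n → p' = q j' →
      (∀ l, 1 ≤ l → l ≤ n → f (q l) ≤ 0) → f (q k) = 0 →
      c ≠ 0 →
      (∀ w : E2, f.linear w = c * ((p - q k) 0 * w 1 - (p - q k) 1 * w 0)) →
      c * ((p - q k) 0 * (p' - q k) 1 - (p - q k) 1 * (p' - q k) 0) < 0 := by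
    intro p p' j j' f c hne hne' hpp' hj1 hj2 hpj hj1' hj2' hpj' hfle hfk hc hrep
    have hv : p - q k ≠ 0 := sub_ne_zero.mpr hne
    have hval : c * ((p - q k) 0 * (p' - q k) 1 - (p - q k) 1 * (p' - q k) 0)
        = f p' := by
      rw [← hrep]
      have := f.linearMap_vsub p' (q k)
      simp only [vsub_eq_sub] at this
      rw [this, hfk, sub_zero]
    rw [hval]
    have hle' : f p' ≤ 0 := by rw [hpj']; exact hfle j' hj1' hj2'
    rcases lt_or_eq_of_le hle' with h' | h'
    · exact h'
    · exfalso
      have hcross : (p - q k) 0 * (p' - q k) 1 - (p - q k) 1 * (p' - q k) 0 = 0 := by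
        have : c * ((p - q k) 0 * (p' - q k) 1 - (p - q k) 1 * (p' - q k) 0) = 0 := by
          rw [hval, ← h']
        exact (mul_eq_zero.mp this).resolve_left hc
      obtain ⟨t, ht⟩ := smul_of_cross _ _ hv hcross
      have hc3 : Collinear ℝ ({q k, p, p'} : Set E2) :=
        collinear_of_smul (q k) p p' t ht
      rw [hpj, hpj'] at hc3
      exact hcol k j j' hk1 hk2 hj1 hj2 hj1' hj2'
        (by rw [← hpj]; exact hne.symm)
        (by rw [← hpj']; exact hne'.symm)
        (by rw [← hpj, ← hpj']; exact hpp') hc3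
  -- get representations
  have mkrep : ∀ (p : E2) (f : E2 →ᵃ[ℝ] ℝ), p ≠ q k → f.linear ≠ 0 → f (q k) = 0 → f p = 0 →
      ∃ c : ℝ, c ≠ 0 ∧ ∀ w : E2, f.linear w = c * ((p - q k) 0 * w 1 - (p - q k) 1 * w 0) := by
    intro p f hne hflin hfk hfp
    have hv : p - q k ≠ 0 := sub_ne_zero.mpr hne
    have hgv : f.linear (p - q k) = 0 := by
      have := f.linearMap_vsub p (q k)
      simp only [vsub_eq_sub] at this
      rw [this, hfp, hfk, sub_zero]
    exact lin_rep f.linear (p - q k) hflin hv hgv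
  obtain ⟨c₁, hc₁, hrep₁⟩ := mkrep p₁ f₁ hne₁ hflin₁ hfk₁ hfp₁
  obtain ⟨c₂, hc₂, hrep₂⟩ := mkrep p₂ f₂ hne₂ hflin₂ hfk₂ hfp₂
  obtain ⟨c₃, hc₃, hrep₃⟩ := mkrep p₃ f₃ hne₃ hflin₃ hfk₃ hfp₃
  have h12' := key p₁ p₂ j₁ j₂ f₁ c₁ hne₁ hne₂ h12 hj₁1 hj₁2 hpj₁ hj₂1 hj₂2 hpj₂ hfle₁ hfk₁ hc₁ hrep₁
  have h13' := key p₁ p₃ j₁ j₃ f₁ c₁ hne₁ hne₃ h13 hj₁1 hj₁2 hpj₁ hj₃1 hj₃2 hpj₃ hfle₁ hfk₁ hc₁ hrep₁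
  have h21' := key p₂ p₁ j₂ j₁ f₂ c₂ hne₂ hne₁ (Ne.symm h12) hj₂1 hj₂2 hpj₂ hj₁1 hj₁2 hpj₁ hfle₂ hfk₂ hc₂ hrep₂
  have h23' := key p₂ p₃ j₂ j₃ f₂ c₂ hne₂ hne₃ h23 hj₂1 hj₂2 hpj₂ hj₃1 hj₃2 hpj₃ hfle₂ hfk₂ hc₂ hrep₂
  have h31' := key p₃ p₁ j₃ j₁ f₃ c₃ hne₃ hne₁ (Ne.symm h13) hj₃1 hj₃2 hpj₃ hj₁1 hj₁2 hpj₁ hfle₃ hfk₃ hc₃ hrep₃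
  have h32' := key p₃ p₂ j₃ j₂ f₃ c₃ hne₃ hne₂ (Ne.symm h23) hj₃1 hj₃2 hpj₃ hj₂1 hj₂2 hpj₂ hfle₃ hfk₃ hc₃ hrep₃
  -- pure sign facts
  set v₁ : E2 := p₁ - q k
  set v₂ : E2 := p₂ - q k
  set v₃ : E2 := p₃ - q k
  set A : ℝ := v₁ 0 * v₂ 1 - v₁ 1 * v₂ 0 with hA
  set A' : ℝ := v₁ 0 * v₃ 1 - v₁ 1 * v₃ 0 with hA'
  set B : ℝ := v₂ 0 * v₁ 1 - v₂ 1 * v₁ 0 with hB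
  set B' : ℝ := v₂ 0 * v₃ 1 - v₂ 1 * v₃ 0 with hB'
  set C : ℝ := v₃ 0 * v₁ 1 - v₃ 1 * v₁ 0 with hC
  set C' : ℝ := v₃ 0 * v₂ 1 - v₃ 1 * v₂ 0 with hC'
  have P1 : 0 < A * A' := by
    have h := mul_pos_of_neg_of_neg h12' h13'
    have : A * A' = (c₁ * A) * (c₁ * A') / c₁ ^ 2 := by field_simp
    rw [this]
    exact div_pos h (by positivity)
  have P2 : 0 < B * B' := by
    have h := mul_pos_of_neg_of_neg h21' h23'
    have : B * B' = (c₂ * B) * (c₂ * B') / c₂ ^ 2 := by field_simp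
    rw [this]
    exact div_pos h (by positivity)
  have P3 : 0 < C * C' := by
    have h := mul_pos_of_neg_of_neg h31' h32'
    have : C * C' = (c₃ * C) * (c₃ * C') / c₃ ^ 2 := by field_simp
    rw [this]
    exact div_pos h (by positivity)
  have hBA : B = -A := by rw [hB, hA]; ring
  have hCA : C = -A' := by rw [hC, hA']; ring
  have hCB : C' = -B' := by rw [hC', hB']; ring
  rw [hBA] at P2
  rw [hCA, hCB] at P3
  nlinarith [mul_pos P1 P3, P2, sq_nonneg A']

/-- Degree bound from Lemma 1 of the paper. For points
`q_1, …, q_n` in general position with strictly increasing `x`-coordinates,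
every point lies in at most 4 edges of `Part(S)`: the chain edges
`{q_k, q_{k+1}}` together with the convex-hull edges (pairs lying on the
boundary line of a closed half-plane containing all the points). -/
theorem part_degree_at_most_four
    (n : ℕ) (hn : 2 ≤ n) (q : ℕ → EuclideanSpace ℝ (Fin 2))
    (hx : ∀ k, 1 ≤ k → k < n → q k 0 < q (k + 1) 0)
    (hcol : ∀ i j l, 1 ≤ i → i ≤ n → 1 ≤ j → j ≤ n → 1 ≤ l → l ≤ n →
      q i ≠ q j → q i ≠ q l → q j ≠ q l →
      ¬ Collinear ℝ ({q i, q j, q l} : Set (EuclideanSpace ℝ (Fin 2)))) :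
    ∀ k, 1 ≤ k → k ≤ n →
      Set.ncard {e : Finset (EuclideanSpace ℝ (Fin 2)) |
        ((∃ a, 1 ≤ a ∧ a < n ∧ e = {q a, q (a + 1)}) ∨
          (∃ i j, 1 ≤ i ∧ i ≤ n ∧ 1 ≤ j ∧ j ≤ n ∧ q i ≠ q j ∧ e = {q i, q j} ∧
            ∃ f : EuclideanSpace ℝ (Fin 2) →ᵃ[ℝ] ℝ, f.linear ≠ 0 ∧
              (∀ l, 1 ≤ l → l ≤ n → f (q l) ≤ 0) ∧ f (q i) = 0 ∧ f (q j) = 0)) ∧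
        q k ∈ e} ≤ 4 := by
  intro k hk1 hk2
  have mono : ∀ a b, 1 ≤ a → a < b → b ≤ n → q a 0 < q b 0 := by
    intro a b ha
    induction b with
    | zero => omega
    | succ m ih =>
      intro hab hb
      rcases Nat.lt_succ_iff_lt_or_eq.mp hab with h' | h'
      · exact (ih h' (by omega)).trans (hx m (by omega) (by omega))
      · subst h'; exact hx a ha (by omega)
  have inj : ∀ a b, 1 ≤ a → a ≤ n → 1 ≤ b → b ≤ n → q a = q b → a = b := by
    intro a b ha1 ha2 hb1 hb2 h
    by_contra hne
    have h0 : q a 0 = q b 0 := congrArg (fun v : E2 => v 0) h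
    rcases Nat.lt_or_ge a b with h' | h'
    · exact absurd h0 (ne_of_lt (mono a b ha1 h' hb2))
    · exact absurd h0.symm (ne_of_lt (mono b a hb1 (by omega) ha2))
  set P : Set E2 := {p : E2 | p ≠ q k ∧ ∃ j, 1 ≤ j ∧ j ≤ n ∧ p = q j ∧
      ∃ f : E2 →ᵃ[ℝ] ℝ, f.linear ≠ 0 ∧ (∀ l, 1 ≤ l → l ≤ n → f (q l) ≤ 0) ∧
        f (q k) = 0 ∧ f p = 0} with hPdef
  have hP2 : P.ncard ≤ 2 := partners_le_two n q hcol k hk1 hk2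
  have hPfin : P.Finite := by
    apply Set.Finite.subset ((Set.finite_Icc 1 n).image q)
    rintro p ⟨-, j, hj1, hj2, rfl, -⟩
    exact ⟨j, ⟨hj1, hj2⟩, rfl⟩
  set A : Set (Finset E2) :=
    {({q (k - 1), q k} : Finset E2), ({q k, q (k + 1)} : Finset E2)} with hAdef
  set B : Set (Finset E2) := (fun p => ({q k, p} : Finset E2)) '' P with hBdef
  have hsub : {e : Finset E2 |
      ((∃ a, 1 ≤ a ∧ a < n ∧ e = {q a, q (a + 1)}) ∨
        (∃ i j, 1 ≤ i ∧ i ≤ n ∧ 1 ≤ j ∧ j ≤ n ∧ q i ≠ q j ∧ e = {q i, q j} ∧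
          ∃ f : E2 →ᵃ[ℝ] ℝ, f.linear ≠ 0 ∧
            (∀ l, 1 ≤ l → l ≤ n → f (q l) ≤ 0) ∧ f (q i) = 0 ∧ f (q j) = 0)) ∧
      q k ∈ e} ⊆ A ∪ B := by
    rintro e ⟨hcase, hke⟩
    rcases hcase with ⟨a, ha1, ha2, rfl⟩ |
      ⟨i, j, hi1, hi2, hj1, hj2, hij, rfl, f, hflin, hfle, hfi, hfj⟩
    · rw [Finset.mem_insert, Finset.mem_singleton] at hke
      left
      rcases hke with h | h
      · obtain rfl : k = a := inj k a hk1 hk2 ha1 (le_of_lt ha2) h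
        right; rfl
      · obtain rfl : k = a + 1 := inj k (a + 1) hk1 hk2 (by omega) (by omega) h
        left
        show ({q a, q (a + 1)} : Finset E2) = {q (a + 1 - 1), q (a + 1)}
        rw [Nat.add_sub_cancel]
    · rw [Finset.mem_insert, Finset.mem_singleton] at hke
      right
      rcases hke with h | h
      · refine ⟨q j, ⟨fun hh => hij (by rw [← h]; exact hh.symm), j, hj1, hj2, rfl,
          f, hflin, hfle, (by rw [h]; exact hfi), hfj⟩, ?_⟩
        show ({q k, q j} : Finset E2) = {q i, q j}
        rw [h]
      · refine ⟨q i, ⟨fun hh => hij (hh.trans h), i, hi1, hi2, rfl,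
          f, hflin, hfle, (by rw [h]; exact hfj), hfi⟩, ?_⟩
        show ({q k, q i} : Finset E2) = {q i, q j}
        rw [h, Finset.pair_comm]
  have hAfin : A.Finite := (Set.finite_singleton _).insert _
  have hBfin : B.Finite := hPfin.image _
  calc Set.ncard {e : Finset E2 |
      ((∃ a, 1 ≤ a ∧ a < n ∧ e = {q a, q (a + 1)}) ∨
        (∃ i j, 1 ≤ i ∧ i ≤ n ∧ 1 ≤ j ∧ j ≤ n ∧ q i ≠ q j ∧ e = {q i, q j} ∧
          ∃ f : E2 →ᵃ[ℝ] ℝ, f.linear ≠ 0 ∧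
            (∀ l, 1 ≤ l → l ≤ n → f (q l) ≤ 0) ∧ f (q i) = 0 ∧ f (q j) = 0)) ∧
      q k ∈ e} ≤ (A ∪ B).ncard := Set.ncard_le_ncard hsub (hAfin.union hBfin)
    _ ≤ A.ncard + B.ncard := Set.ncard_union_le A B
    _ ≤ 2 + 2 := by
        gcongr
        · exact le_trans (Set.ncard_insert_le _ _) (by simp)
        · exact le_trans (Set.ncard_image_le hPfin) hP2
    _ = 4 := rfl
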